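/- Let σ: ℕ → ℕ be a bijection and let T = T_σ be the associated permutation operator on H. If the closure of P(T) has finite codimension in H (i.e. the orthogonal complement of the closure of P(T) is finite-dimensional), then P(T) is dense in H; in particular the closure of P(T) equals H. -/

import Mathlib

open Submodule Function
open scoped ENNReal

/-- For a permutation operator `T e_n = e_{σ n}`, if the closure of the set of periodic
points has finite codimension in `H` (i.e. its orthogonal complement is
finite-dimensional), then the periodic points are dense in `H`. -/
theorem permutation_periodic_points_dense_of_finite_codimension
    {H : Type*} [NormedAddCommGroup H] [InnerProductSpace ℂ H] [CompleteSpace H]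
    (e : HilbertBasis ℕ ℂ H) (σ : Equiv.Perm ℕ) (T : H →L[ℂ] H)
    (hT : ∀ n, T (e n) = e (σ n))
    (hcodim : FiniteDimensional ℂ
      ((Submodule.span ℂ {x : H | ∃ m : ℕ, 0 < m ∧ (T ^ m) x = x})ᗮ)) :
    Dense {x : H | ∃ m : ℕ, 0 < m ∧ (T ^ m) x = x} := by
  classical
  set P : Set H := {x : H | ∃ m : ℕ, 0 < m ∧ (T ^ m) x = x} with hPdef
  -- coefficients of T x
  have key : ∀ (x : H) (k : ℕ), e.repr (T x) k = e.repr x (σ.symm k) := by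
    intro x k
    have h1 : HasSum (fun n => e.repr x n • e n) x := e.hasSum_repr x
    have h2 : HasSum (fun n => e.repr x n • e (σ n)) (T x) := by
      have := h1.mapL T
      simpa [hT] using this
    have h3 := h2.mapL (innerSL ℂ (e k))
    simp only [innerSL_apply_apply] at h3
    have h4 : (fun n => (inner ℂ (e k) (e.repr x n • e (σ n)) : ℂ)) =
        fun n => if n = σ.symm k then e.repr x (σ.symm k) else 0 := by
      funext n
      rw [inner_smul_right, orthonormal_iff_ite.mp e.orthonormal]
      by_cases hn : n = σ.symm k
      · subst hn
        simp
      · have hk : k ≠ σ n := by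
          intro h
          exact hn (by simp [h])
        rw [if_neg hk, if_neg hn, mul_zero]
    rw [h4] at h3
    have h5 : HasSum (fun n => if n = σ.symm k then e.repr x (σ.symm k) else 0)
        (e.repr x (σ.symm k)) := hasSum_ite_eq (σ.symm k) _
    rw [e.repr_apply_apply]
    exact h3.unique h5
  -- coefficients of powers
  have key2 : ∀ (m : ℕ) (x : H) (k : ℕ),
      e.repr ((T ^ m) x) k = e.repr x ((σ.symm ^ m) k) := by
    intro m
    induction m with
    | zero => intro x k; simp
    | succ m ih =>
        intro x k
        have h1 : (T ^ (m + 1)) x = (T ^ m) (T x) := by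
          rw [pow_succ]; rfl
        rw [h1, ih, key]
        congr 1
        rw [pow_succ', Equiv.Perm.mul_apply]
  -- constancy of coefficients along orbits for periodic points
  have hconst : ∀ (x : H) (m : ℕ), (T ^ m) x = x →
      ∀ k : ℕ, e.repr x ((σ ^ m) k) = e.repr x k := by
    intro x m hx k
    have h1 : e.repr x ((σ ^ m) k) = e.repr x ((σ.symm ^ m) ((σ ^ m) k)) := by
      conv_lhs => rw [← hx, key2]
    have h2 : (σ.symm ^ m) ((σ ^ m) k) = k := by
      have h3 : σ.symm ^ m = (σ ^ m)⁻¹ := by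
        rw [← inv_pow]; rfl
      rw [h3]
      simp
    rw [h1, h2]
  -- iterating a fixed point
  have iter : ∀ (S : H →L[ℂ] H) (x : H), S x = x → ∀ k : ℕ, (S ^ k) x = x := by
    intro S x hx k
    induction k with
    | zero => simp
    | succ k ih => rw [pow_succ, ContinuousLinearMap.mul_apply, hx, ih]
  -- P is a submodule
  have hzero : (0 : H) ∈ P := ⟨1, one_pos, by simp⟩
  have hadd : ∀ x y : H, x ∈ P → y ∈ P → x + y ∈ P := by
    rintro x y ⟨m, hm, hx⟩ ⟨l, hl, hy⟩
    refine ⟨m * l, Nat.mul_pos hm hl, ?_⟩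
    have h1 : (T ^ (m * l)) x = x := by
      rw [pow_mul]; exact iter _ _ hx l
    have h2 : (T ^ (m * l)) y = y := by
      rw [mul_comm, pow_mul]; exact iter _ _ hy m
    rw [map_add, h1, h2]
  have hsmul : ∀ (c : ℂ) (x : H), x ∈ P → c • x ∈ P := by
    rintro c x ⟨m, hm, hx⟩
    exact ⟨m, hm, by rw [map_smul, hx]⟩
  let Psub : Submodule ℂ H :=
    { carrier := P
      add_mem' := fun hx hy => hadd _ _ hx hy
      zero_mem' := hzero
      smul_mem' := fun c x hx => hsmul c x hx }
  have hPsub : (Psub : Set H) = P := rfl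
  have hspan : Submodule.span ℂ P = Psub := by
    rw [← hPsub, Submodule.span_eq]
  rw [hspan] at hcodim
  -- main case split: all points periodic for σ, or not
  by_cases hper : ∀ n : ℕ, ∃ k : ℕ, 0 < k ∧ (σ ^ k) n = n
  · -- every basis vector is periodic, so P is dense
    have hTe : ∀ (k : ℕ) (i : ℕ), (T ^ k) (e i) = e ((σ ^ k) i) := by
      intro k
      induction k with
      | zero => intro i; simp
      | succ k ih =>
          intro i
          have h1 : (T ^ (k + 1)) (e i) = (T ^ k) (T (e i)) := by
            rw [pow_succ]; rfl
          rw [h1, hT, ih]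
          congr 1
    have hbasis : ∀ i : ℕ, e i ∈ P := by
      intro i
      obtain ⟨k, hk, hfix⟩ := hper i
      exact ⟨k, hk, by rw [hTe, hfix]⟩
    have horb : Psubᗮ = ⊥ := by
      rw [Submodule.eq_bot_iff]
      intro x hx
      rw [Submodule.mem_orthogonal] at hx
      have hco : ∀ i, e.repr x i = 0 := by
        intro i
        rw [e.repr_apply_apply]
        exact hx (e i) (hbasis i)
      have hre : e.repr x = 0 := by
        ext i
        simpa using hco i
      apply e.repr.injective
      rw [hre, map_zero]
    have hdense : Psub.topologicalClosure = ⊤ :=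
      Submodule.topologicalClosure_eq_top_iff.mpr horb
    have hd := Submodule.dense_iff_topologicalClosure_eq_top.mpr hdense
    rwa [hPsub] at hd
  · -- there is a point with infinite orbit: contradiction with finite codimension
    push_neg at hper
    obtain ⟨n, hn⟩ := hper
    -- distinct iterates
    have hgen : ∀ s t : ℕ, (σ ^ s) n = (σ ^ t) n → s = t := by
      have haux : ∀ s t : ℕ, s ≤ t → (σ ^ s) n = (σ ^ t) n → s = t := by
        intro s t hst h
        have h1 : (σ ^ t) n = (σ ^ s) ((σ ^ (t - s)) n) := by
          have ht : s + (t - s) = t := by omega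
          rw [← Equiv.Perm.mul_apply, ← pow_add, ht]
        have h2 : (σ ^ s) ((σ ^ (t - s)) n) = (σ ^ s) n := by rw [← h1, h]
        have h3 : (σ ^ (t - s)) n = n := (σ ^ s).injective h2
        have h4 : t - s = 0 := by
          by_contra h4
          exact hn (t - s) (Nat.pos_of_ne_zero h4) h3
        omega
      intro s t h
      rcases le_total s t with hst | hst
      · exact haux s t hst h
      · exact (haux t s hst h.symm).symm
    -- periodic points have zero coefficient on the orbit of n
    have hzero_coeff : ∀ x ∈ P, ∀ j : ℕ, e.repr x ((σ ^ j) n) = 0 := by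
      rintro x ⟨m, hm, hx⟩ j
      have hconst' : ∀ t : ℕ, e.repr x ((σ ^ (m * t + j)) n) = e.repr x ((σ ^ j) n) := by
        intro t
        induction t with
        | zero => simp
        | succ t ih =>
            have h1 : (σ ^ (m * (t + 1) + j)) n = (σ ^ m) ((σ ^ (m * t + j)) n) := by
              rw [← Equiv.Perm.mul_apply, ← pow_add]
              congr 1
              ring
            rw [h1, hconst x m hx, ih]
      have hinj : Function.Injective (fun t : ℕ => (σ ^ (m * t + j)) n) := by
        intro s t h
        have h' : m * s + j = m * t + j := hgen _ _ h
        have h'' : m * s = m * t := by omega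
        exact Nat.eq_of_mul_eq_mul_left hm h''
      have hsum : Summable (fun i : ℕ => ‖e.repr x i‖ ^ (2 : ℝ≥0∞).toReal) :=
        (lp.memℓp (e.repr x)).summable (by norm_num)
      have hsum2 : Summable (fun t : ℕ =>
          ‖e.repr x ((σ ^ (m * t + j)) n)‖ ^ (2 : ℝ≥0∞).toReal) :=
        hsum.comp_injective hinj
      have hsum3 : Summable (fun _ : ℕ =>
          ‖e.repr x ((σ ^ j) n)‖ ^ (2 : ℝ≥0∞).toReal) := by
        refine hsum2.congr ?_
        intro t
        rw [hconst' t]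
      have h0 : ‖e.repr x ((σ ^ j) n)‖ ^ (2 : ℝ≥0∞).toReal = 0 :=
        (summable_const_iff _).mp hsum3
      have h2 : (2 : ℝ≥0∞).toReal ≠ 0 := by norm_num
      have h5 := (Real.rpow_eq_zero (norm_nonneg _) h2).mp h0
      rwa [norm_eq_zero] at h5
    -- the orbit vectors lie in the orthogonal complement
    have hmem : ∀ j : ℕ, e ((σ ^ j) n) ∈ Psubᗮ := by
      intro j
      rw [Submodule.mem_orthogonal]
      intro u hu
      have h0 : (inner ℂ (e ((σ ^ j) n)) u : ℂ) = 0 := by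
        rw [← e.repr_apply_apply]
        exact hzero_coeff u hu j
      rw [← inner_conj_symm, h0, map_zero]
    -- infinitely many orthonormal vectors there: contradiction
    have hinj2 : Function.Injective (fun j : ℕ => (σ ^ j) n) := fun s t h => hgen s t h
    have horth : Orthonormal ℂ (fun j : ℕ => e ((σ ^ j) n)) :=
      e.orthonormal.comp _ hinj2
    have hli : LinearIndependent ℂ (fun j : ℕ => e ((σ ^ j) n)) :=
      horth.linearIndependent
    let w : ℕ → Psubᗮ := fun j => ⟨e ((σ ^ j) n), hmem j⟩
    have hliw : LinearIndependent ℂ w :=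
      LinearIndependent.of_comp Psubᗮ.subtype hli
    exact absurd hliw (Module.Finite.not_linearIndependent_of_infinite w)
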